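/- Let p be a prime and k, l natural numbers with k ≥ 1, l ≥ 1 and p^k ≥ 3, and let n = φ(p^k)·l. If m is a natural number with 2 ≤ m < p^k − 1 and b is a natural number whose remainder modulo p^k is greater than m, then the equation x_1^n + ⋯ + x_m^n = b has no solution in nonnegative integers. -/

import Mathlib

/-- If `p` is prime, `k, l ≥ 1`, `p^k ≥ 3`, `n = φ(p^k)·l`, `2 ≤ m < p^k - 1` and the
remainder of `b` modulo `p^k` exceeds `m`, then `x₁^n + ⋯ + x_m^n = b` has no solution in
nonnegative integers. -/
theorem stmt_9 (p k l m b : ℕ) (hp : p.Prime) (hk : 1 ≤ k) (hl : 1 ≤ l)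
    (hpk : 3 ≤ p ^ k) (n : ℕ) (hn : n = Nat.totient (p ^ k) * l)
    (hm : 2 ≤ m) (hmp : m < p ^ k - 1) (hb : 1 ≤ b) (hr : m < b % p ^ k) :
    ¬ ∃ x : Fin m → ℕ, ∑ i, x i ^ n = b := by
  rintro ⟨x, hx⟩
  set N := p ^ k with hN
  have hN0 : 0 < N := by positivity
  haveI : NeZero N := ⟨hN0.ne'⟩
  have hNk : k ≤ n := by
    have h1 : Nat.totient N = p ^ (k - 1) * (p - 1) := by
      rw [hN, Nat.totient_prime_pow hp hk]
    have h2 : 2 ^ (k - 1) ≤ p ^ (k - 1) :=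
      Nat.pow_le_pow_left hp.two_le _
    have h3 : k ≤ 2 ^ (k - 1) := by
      have := Nat.lt_two_pow_self (n := k - 1)
      omega
    have h4 : 1 ≤ p - 1 := by have := hp.two_le; omega
    calc k ≤ p ^ (k - 1) := le_trans h3 h2
      _ ≤ p ^ (k - 1) * (p - 1) := Nat.le_mul_of_pos_right _ (by omega)
      _ = Nat.totient N := h1.symm
      _ ≤ Nat.totient N * l := Nat.le_mul_of_pos_right _ hl
      _ = n := hn.symm
  have key : ∀ y : ℕ, ((y : ZMod N) ^ n = 0 ∨ (y : ZMod N) ^ n = 1) := by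
    intro y
    by_cases hc : p ∣ y
    · left
      have hdvd : N ∣ y ^ n := by
        calc N = p ^ k := hN
          _ ∣ y ^ k := pow_dvd_pow_of_dvd hc k
          _ ∣ y ^ n := pow_dvd_pow y hNk
      have : ((y ^ n : ℕ) : ZMod N) = 0 := (ZMod.natCast_eq_zero_iff _ _).mpr hdvd
      push_cast at this
      exact this
    · right
      have hco : Nat.Coprime y N := by
        rw [hN]
        exact ((Nat.Prime.coprime_iff_not_dvd hp).mpr hc).symm.pow_right k
      have hu : IsUnit (y : ZMod N) := (ZMod.isUnit_iff_coprime y N).mpr hco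
      obtain ⟨u, hu⟩ := hu
      have : u ^ Nat.totient N = 1 := ZMod.pow_totient u
      rw [hn, pow_mul, ← hu, ← Units.val_pow_eq_pow_val, this]
      simp
  -- compute b mod N as a sum of 0/1's
  set t : ℕ := ∑ i, (if (x i : ZMod N) ^ n = 1 then 1 else 0) with ht
  have htm : t ≤ m := by
    calc t ≤ ∑ _i : Fin m, 1 := Finset.sum_le_sum (fun i _ => by split <;> omega)
      _ = m := by simp
  haveI : Fact (1 < N) := ⟨by omega⟩
  have hsum : (b : ZMod N) = (t : ℕ) := by
    rw [← hx, ht]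
    push_cast [apply_ite (Nat.cast : ℕ → ZMod N)]
    refine Finset.sum_congr rfl fun i _ => ?_
    rcases key (x i) with h | h
    · rw [if_neg (h ▸ zero_ne_one), h]
    · rw [h, if_pos rfl]
  have hmod : b % N = t % N := (ZMod.natCast_eq_natCast_iff _ _ _).mp hsum
  have htN : t < N := by omega
  rw [Nat.mod_eq_of_lt htN] at hmod
  omega
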